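/- The pseudo-determinant of M = Q g Q equals the determinant of M padded by the complementary projection: pdet(Q g Q) = det(Q g Q + (I − Q)) = det(Q g Q + Jᵀ(J Jᵀ)⁻¹J). -/

import Mathlib

open Matrix

/-- The pseudo-determinant of a real symmetric matrix: the product of its nonzero
eigenvalues (counted with multiplicity), the empty product being `1`. -/
noncomputable def pdet {n : ℕ} {S : Matrix (Fin n) (Fin n) ℝ} (hS : S.IsHermitian) : ℝ :=
  ∏ i, if hS.eigenvalues i = 0 then 1 else hS.eigenvalues i

/-- `pdet (Q g Q) = det (Q g Q + (I − Q)) = det (Q g Q + Jᵀ (J Jᵀ)⁻¹ J)`: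
the pseudo-determinant equals the determinant of `M` padded by the complementary
projection. -/
theorem pdet_QgQ_eq_det_padded {n m : ℕ} (hm : 0 < m) (hmn : m < n)
    (J : Matrix (Fin m) (Fin n) ℝ) (hJ : J.rank = m)
    (g : Matrix (Fin n) (Fin n) ℝ) (hg : g.PosDef)
    (hJJ : IsUnit (J * Jᵀ).det)
    (Q : Matrix (Fin n) (Fin n) ℝ)
    (hQ : Q = 1 - Jᵀ * (J * Jᵀ)⁻¹ * J)
    (hM : (Q * g * Q).IsHermitian) :
    pdet hM = (Q * g * Q + (1 - Q)).det ∧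
      pdet hM = (Q * g * Q + Jᵀ * (J * Jᵀ)⁻¹ * J).det := by
  have hT : Jᵀ * (J * Jᵀ)⁻¹ * J = 1 - Q := by rw [hQ]; noncomm_ring
  -- Q is symmetric
  have hJJsymm : (J * Jᵀ)ᵀ = J * Jᵀ := by
    rw [transpose_mul, transpose_transpose]
  have hQsym : Qᵀ = Q := by
    rw [hQ]
    simp [transpose_sub, transpose_mul, transpose_transpose, transpose_nonsing_inv,
      hJJsymm, Matrix.mul_assoc]
  -- Q is idempotent
  have hQ2 : Q * Q = Q := by
    have h1 : (J * Jᵀ)⁻¹ * (J * Jᵀ) = 1 := Matrix.nonsing_inv_mul _ hJJ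
    have hTT : (Jᵀ * (J * Jᵀ)⁻¹ * J) * (Jᵀ * (J * Jᵀ)⁻¹ * J)
        = Jᵀ * (J * Jᵀ)⁻¹ * J := by
      calc (Jᵀ * (J * Jᵀ)⁻¹ * J) * (Jᵀ * (J * Jᵀ)⁻¹ * J)
          = Jᵀ * ((J * Jᵀ)⁻¹ * (J * Jᵀ) * ((J * Jᵀ)⁻¹ * J)) := by
            simp only [Matrix.mul_assoc]
        _ = Jᵀ * (J * Jᵀ)⁻¹ * J := by
            rw [h1, Matrix.one_mul, Matrix.mul_assoc]
    rw [hQ, Matrix.sub_mul, Matrix.mul_sub, Matrix.mul_sub, Matrix.mul_one,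
      Matrix.mul_one, Matrix.one_mul, hTT, sub_self, sub_zero]
  set M : Matrix (Fin n) (Fin n) ℝ := Q * g * Q with hMdef
  set P0 : Matrix (Fin n) (Fin n) ℝ := 1 - Q with hP0
  have hMP : M * P0 = 0 := by
    rw [hMdef, hP0, Matrix.mul_sub, Matrix.mul_one, Matrix.mul_assoc (Q * g) Q Q,
      hQ2, sub_self]
  have hPM : P0 * M = 0 := by
    rw [hMdef, hP0, Matrix.sub_mul, Matrix.one_mul, ← Matrix.mul_assoc Q (Q * g) Q,
      ← Matrix.mul_assoc Q Q g, hQ2, sub_self]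
  -- spectral theorem setup
  set U : Matrix (Fin n) (Fin n) ℝ := (hM.eigenvectorUnitary : Matrix (Fin n) (Fin n) ℝ)
    with hUdef
  set lam : Fin n → ℝ := hM.eigenvalues with hlam
  have hUU : U * star U = 1 := Matrix.mem_unitaryGroup_iff.mp hM.eigenvectorUnitary.2
  have hUU' : star U * U = 1 := Matrix.mem_unitaryGroup_iff'.mp hM.eigenvectorUnitary.2
  have hlamcoe : (RCLike.ofReal ∘ lam : Fin n → ℝ) = lam := by
    funext i; simp
  have hspec : M = U * diagonal lam * star U := by
    have := hM.spectral_theorem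
    rwa [hlamcoe] at this
  -- D = star U * M * U
  have hD : star U * M * U = diagonal lam := by
    rw [hspec]
    calc star U * (U * diagonal lam * star U) * U
        = (star U * U) * diagonal lam * (star U * U) := by noncomm_ring
      _ = diagonal lam := by rw [hUU']; noncomm_ring
  set F : Matrix (Fin n) (Fin n) ℝ := star U * P0 * U with hF
  -- D * F = 0 and F * D = 0
  have hDF : diagonal lam * F = 0 := by
    rw [← hD, hF]
    calc (star U * M * U) * (star U * P0 * U)
        = star U * (M * (U * star U) * P0) * U := by noncomm_ring
      _ = 0 := by rw [hUU, Matrix.mul_one, hMP]; simp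
  have hFD : F * diagonal lam = 0 := by
    rw [← hD, hF]
    calc (star U * P0 * U) * (star U * M * U)
        = star U * (P0 * (U * star U) * M) * U := by noncomm_ring
      _ = 0 := by rw [hUU, Matrix.mul_one, hPM]; simp
  -- if lam j = 0 then P0 fixes the j-th eigenvector
  have hcol : ∀ j, lam j = 0 → ∀ i, F i j = if i = j then 1 else 0 := by
    intro j hj i
    set v : Fin n → ℝ := ⇑(hM.eigenvectorBasis j) with hv
    have hMv : M *ᵥ v = 0 := by
      have := hM.mulVec_eigenvectorBasis j
      rw [← hlam, hj] at this
      simpa [hv] using this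
    have hQv : Q *ᵥ v = 0 := by
      by_contra hne
      have hpos := hg.dotProduct_mulVec_pos (x := Q *ᵥ v) hne
      have hzero : star (Q *ᵥ v) ⬝ᵥ (g *ᵥ (Q *ᵥ v)) = 0 := by
        have : star (Q *ᵥ v) ⬝ᵥ (g *ᵥ (Q *ᵥ v)) = v ⬝ᵥ (M *ᵥ v) := by
          rw [hMdef]
          show (Q *ᵥ v) ⬝ᵥ (g *ᵥ (Q *ᵥ v)) = v ⬝ᵥ ((Q * g * Q) *ᵥ v)
          rw [← Matrix.mulVec_mulVec, ← Matrix.mulVec_mulVec]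
          rw [Matrix.dotProduct_mulVec v Q, ← Matrix.vecMul_transpose, hQsym]
        rw [this, hMv, dotProduct_zero]
      rw [hzero] at hpos
      exact lt_irrefl _ hpos
    have hPv : P0 *ᵥ v = v := by
      rw [hP0, Matrix.sub_mulVec, Matrix.one_mulVec, hQv, sub_zero]
    have hUv : U *ᵥ Pi.single j 1 = v := by
      rw [hUdef, hv]
      exact Matrix.IsHermitian.eigenvectorUnitary_mulVec hM j
    have hUsv : star U *ᵥ v = Pi.single j 1 := by
      rw [hUdef, hv]
      exact Matrix.IsHermitian.star_eigenvectorUnitary_mulVec hM j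
    have hFcol : F *ᵥ Pi.single j 1 = Pi.single j 1 := by
      rw [hF, ← Matrix.mulVec_mulVec, ← Matrix.mulVec_mulVec, hUv, hPv, hUsv]
    have : (F *ᵥ Pi.single j 1) i = F i j := by
      simp [Matrix.mulVec_single]
    rw [← this, hFcol]
    by_cases h : i = j <;> simp [h, Pi.single_apply]
  -- F is the diagonal indicator of zero eigenvalues
  have hFdiag : F = diagonal (fun i => if lam i = 0 then 1 else 0) := by
    ext i j
    by_cases hj : lam j = 0
    · rw [hcol j hj i]
      by_cases h : i = j
      · subst h; simp [Matrix.diagonal_apply_eq, hj]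
      · simp [Matrix.diagonal_apply_ne _ h, h]
    · have : (F * diagonal lam) i j = 0 := by rw [hFD]; rfl
      rw [Matrix.mul_diagonal] at this
      have hFij : F i j = 0 := by
        rcases mul_eq_zero.mp this with h | h
        · exact h
        · exact absurd h hj
      by_cases h : i = j
      · subst h; simp [Matrix.diagonal_apply_eq, hj, hFij]
      · simp [Matrix.diagonal_apply_ne _ h, hFij]
  -- padding decomposition
  have hkey : M + P0 = U * (diagonal lam + F) * star U := by
    have hP0eq : U * F * star U = P0 := by
      rw [hF]
      calc U * (star U * P0 * U) * star U
          = (U * star U) * P0 * (U * star U) := by noncomm_ring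
        _ = P0 := by rw [hUU]; noncomm_ring
    rw [Matrix.mul_add, Matrix.add_mul, ← hspec, hP0eq]
  have hdetU : U.det * (star U).det = 1 := by
    rw [← Matrix.det_mul, hUU, Matrix.det_one]
  have hmain : pdet hM = (M + P0).det := by
    rw [hkey, Matrix.det_mul, Matrix.det_mul]
    have : (diagonal lam + F).det = pdet hM := by
      rw [hFdiag, Matrix.diagonal_add, Matrix.det_diagonal]
      unfold pdet
      refine Finset.prod_congr rfl fun i _ => ?_
      rw [← hlam]
      by_cases h : lam i = 0 <;> simp [h]
    rw [this, mul_comm U.det, mul_assoc, hdetU, mul_one]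
  exact ⟨hmain, by rw [hT]; exact hmain⟩
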